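/- Let ρ_a, ρ_b, ρ_c, ρ_d be 4×4 density matrices and let B be a dichotomic observable on ℂ⁴ such that Tr[(ρ_a + ρ_b − ρ_c − ρ_d)B] = 4. Then Bρ_a = ρ_a, Bρ_b = ρ_b, Bρ_c = −ρ_c, Bρ_d = −ρ_d, and Tr[ρ_i ρ_j] = 0 for every i ∈ {a,b} and j ∈ {c,d}. -/

import Mathlib

open Matrix
open scoped ComplexOrder
open scoped MatrixOrder

noncomputable section

abbrev Mat4 := Matrix (Fin 4) (Fin 4) ℂ

lemma trace_nonneg_of_psd {A : Mat4} (hA : A.PosSemidef) : 0 ≤ A.trace := by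
  rw [Matrix.trace]
  apply Finset.sum_nonneg
  intro i _
  have := hA.dotProduct_mulVec_nonneg (Pi.single i 1)
  simpa [dotProduct, Matrix.mulVec, Pi.single_apply, Finset.sum_ite_eq] using this

lemma trace_mul_psd_nonneg {ρ M : Mat4} (hρ : ρ.PosSemidef) (hM : M.PosSemidef) :
    0 ≤ (ρ * M).trace := by
  have hS := (CFC.sqrt_nonneg ρ).posSemidef
  have hSH : (CFC.sqrt ρ)ᴴ = CFC.sqrt ρ := hS.isHermitian
  have h1 : (CFC.sqrt ρ * M * CFC.sqrt ρ).trace = (ρ * M).trace := by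
    rw [Matrix.trace_mul_comm, ← Matrix.mul_assoc, CFC.sqrt_mul_sqrt_self ρ hρ.nonneg]
  rw [← h1]
  have h2 := hM.conjTranspose_mul_mul_same (CFC.sqrt ρ)
  rw [hSH] at h2
  exact trace_nonneg_of_psd h2

lemma eq_zero_of_psd_trace_zero {A : Mat4} (hA : A.PosSemidef) (h : A.trace = 0) : A = 0 := by
  set S := CFC.sqrt A with hSdef
  have hSH : Sᴴ = S := (CFC.sqrt_nonneg A).posSemidef.isHermitian
  have htr : (Sᴴ * S).trace = 0 := by rw [hSH, CFC.sqrt_mul_sqrt_self A hA.nonneg, h]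
  have hS0 : S = 0 := by
    rw [Matrix.trace] at htr
    have hterm : ∀ i ∈ Finset.univ, (0:ℂ) ≤ (Sᴴ * S).diag i := by
      intro i _
      have : (Sᴴ * S).diag i = star (fun j => S j i) ⬝ᵥ (fun j => S j i) := by
        simp [Matrix.diag, Matrix.mul_apply, dotProduct, Matrix.conjTranspose_apply]
      rw [this]
      exact dotProduct_star_self_nonneg _
    have hz := (Finset.sum_eq_zero_iff_of_nonneg hterm).mp htr
    ext i j
    have hj := hz j (Finset.mem_univ j)
    have : star (fun k => S k j) ⬝ᵥ (fun k => S k j) = 0 := by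
      rw [← hj]
      simp [Matrix.diag, Matrix.mul_apply, dotProduct, Matrix.conjTranspose_apply]
    have hcol := dotProduct_star_self_eq_zero.mp this
    exact congrFun hcol i
  rw [← CFC.sqrt_mul_sqrt_self A hA.nonneg, ← hSdef, hS0, Matrix.mul_zero]

lemma psd_one_add_dichotomic {B : Mat4} (hB : B.IsHermitian) (hB2 : B * B = 1) :
    (1 + B).PosSemidef := by
  have hH : (1 + B).IsHermitian := Matrix.IsHermitian.add Matrix.isHermitian_one hB
  refine Matrix.PosSemidef.of_dotProduct_mulVec_nonneg hH fun x => ?_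
  have hsq : (1 + B) * (1 + B) = (1 + B) + (1 + B) := by
    simp only [mul_add, add_mul, hB2, Matrix.one_mul, Matrix.mul_one]
    abel
  have h1 : star ((1 + B) *ᵥ x) ⬝ᵥ ((1 + B) *ᵥ x)
      = star x ⬝ᵥ ((1 + B) * (1 + B)) *ᵥ x := by
    rw [Matrix.star_mulVec, hH.eq, ← Matrix.dotProduct_mulVec, Matrix.mulVec_mulVec]
  have h2 : star ((1 + B) *ᵥ x) ⬝ᵥ ((1 + B) *ᵥ x)
      = star x ⬝ᵥ (1 + B) *ᵥ x + star x ⬝ᵥ (1 + B) *ᵥ x := by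
    rw [h1, hsq, Matrix.add_mulVec, dotProduct_add]
  have key : star x ⬝ᵥ (1 + B) *ᵥ x
      = (2:ℂ)⁻¹ * (star ((1 + B) *ᵥ x) ⬝ᵥ ((1 + B) *ᵥ x)) := by
    rw [h2]; ring
  rw [key]
  have h0 : (0:ℂ) ≤ (2:ℂ)⁻¹ := by
    rw [Complex.le_def]
    norm_num
  exact mul_nonneg h0 (dotProduct_star_self_nonneg _)

lemma trace_mul_le_one {ρ B : Mat4} (hρ : ρ.PosSemidef) (hρtr : ρ.trace = 1)
    (hB : B.IsHermitian) (hB2 : B * B = 1) : -(ρ * B).trace ≤ 1 := by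
  have hpsd := psd_one_add_dichotomic hB hB2
  have h := trace_mul_psd_nonneg hρ hpsd
  rw [Matrix.mul_add, Matrix.mul_one, Matrix.trace_add, hρtr] at h
  calc -(ρ * B).trace = 0 - (ρ * B).trace := (zero_sub _).symm
    _ ≤ (1 + (ρ * B).trace) - (ρ * B).trace := sub_le_sub_right h _
    _ = 1 := by ring

lemma fix_of_trace_eq_one {ρ B : Mat4} (hρ : ρ.PosSemidef) (hρtr : ρ.trace = 1)
    (hB : B.IsHermitian) (hB2 : B * B = 1) (h : (ρ * B).trace = 1) : B * ρ = ρ := by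
  set Q : Mat4 := 1 - B with hQdef
  have hQH : Qᴴ = Q := by
    rw [hQdef, Matrix.conjTranspose_sub, Matrix.conjTranspose_one, hB.eq]
  have hQQ : Q * Q = Q + Q := by
    rw [hQdef]
    simp only [sub_mul, mul_sub, hB2, Matrix.one_mul, Matrix.mul_one]
    abel
  have hM : (Q * ρ * Q).PosSemidef := by
    have := hρ.conjTranspose_mul_mul_same Q
    rwa [hQH] at this
  have htr : (Q * ρ * Q).trace = 0 := by
    rw [Matrix.trace_mul_comm, ← Matrix.mul_assoc, hQQ, Matrix.add_mul, Matrix.trace_add,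
      hQdef, Matrix.sub_mul, Matrix.one_mul, Matrix.trace_sub, hρtr,
      Matrix.trace_mul_comm B ρ, h]
    norm_num
  have hM0 : Q * ρ * Q = 0 := eq_zero_of_psd_trace_zero hM htr
  set S := CFC.sqrt ρ with hSdef
  have hSH : Sᴴ = S := (CFC.sqrt_nonneg ρ).posSemidef.isHermitian
  have hss : S * S = ρ := by rw [hSdef]; exact CFC.sqrt_mul_sqrt_self ρ hρ.nonneg
  have hN : (S * Q)ᴴ * (S * Q) = 0 := by
    rw [Matrix.conjTranspose_mul, hSH, hQH]
    calc Q * S * (S * Q) = Q * (S * S) * Q := by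
          rw [Matrix.mul_assoc, Matrix.mul_assoc, Matrix.mul_assoc]
      _ = Q * ρ * Q := by rw [hss]
      _ = 0 := hM0
  have hSQ : S * Q = 0 := Matrix.conjTranspose_mul_self_eq_zero.mp hN
  have hρQ : ρ * Q = 0 := by
    rw [← hss, Matrix.mul_assoc, hSQ, Matrix.mul_zero]
  have hρB : ρ * B = ρ := by
    rw [hQdef, Matrix.mul_sub, Matrix.mul_one, sub_eq_zero] at hρQ
    exact hρQ.symm
  calc B * ρ = (ρ * B)ᴴ := by rw [Matrix.conjTranspose_mul, hB.eq, hρ.isHermitian.eq]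
    _ = ρᴴ := by rw [hρB]
    _ = ρ := hρ.isHermitian.eq

lemma orth_trace {ρ σ B : Mat4} (hρ : ρ.IsHermitian) (hB : B.IsHermitian)
    (h1 : B * ρ = ρ) (h2 : B * σ = -σ) : (ρ * σ).trace = 0 := by
  have hρB : ρ * B = ρ := by
    calc ρ * B = ρᴴ * Bᴴ := by rw [hρ.eq, hB.eq]
      _ = (B * ρ)ᴴ := (Matrix.conjTranspose_mul B ρ).symm
      _ = ρᴴ := by rw [h1]
      _ = ρ := hρ.eq
  have key : (ρ * σ).trace = -(ρ * σ).trace := by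
    calc (ρ * σ).trace = ((ρ * B) * σ).trace := by rw [hρB]
      _ = (ρ * (B * σ)).trace := by rw [Matrix.mul_assoc]
      _ = (ρ * (-σ)).trace := by rw [h2]
      _ = -(ρ * σ).trace := by rw [Matrix.mul_neg, Matrix.trace_neg]
  have h2 : (2:ℂ) * (ρ * σ).trace = 0 := by linear_combination key
  exact (mul_eq_zero.mp h2).resolve_left two_ne_zero

/-- If four density matrices and a dichotomic observable B satisfy
Tr[(ρ_a + ρ_b − ρ_c − ρ_d)B] = 4, then B fixes ρ_a, ρ_b, negates ρ_c, ρ_d,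
and the overlaps Tr[ρ_i ρ_j] vanish for i ∈ {a,b}, j ∈ {c,d}. -/
theorem saturated_correlation_eigenstates
    (ρa ρb ρc ρd : Mat4)
    (ha : ρa.PosSemidef) (hatr : ρa.trace = 1)
    (hb : ρb.PosSemidef) (hbtr : ρb.trace = 1)
    (hc : ρc.PosSemidef) (hctr : ρc.trace = 1)
    (hd : ρd.PosSemidef) (hdtr : ρd.trace = 1)
    (B : Mat4) (hB : B.IsHermitian) (hB2 : B * B = 1)
    (hsat : ((ρa + ρb - ρc - ρd) * B).trace = 4) :
    B * ρa = ρa ∧ B * ρb = ρb ∧ B * ρc = -ρc ∧ B * ρd = -ρd ∧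
      (ρa * ρc).trace = 0 ∧ (ρa * ρd).trace = 0 ∧
      (ρb * ρc).trace = 0 ∧ (ρb * ρd).trace = 0 := by
  have hBn : (-B).IsHermitian := hB.neg
  have hB2n : (-B) * (-B) = 1 := by rw [Matrix.neg_mul, Matrix.mul_neg, neg_neg, hB2]
  set ta := (ρa * B).trace with hta_def
  set tb := (ρb * B).trace with htb_def
  set tc := (ρc * B).trace with htc_def
  set td := (ρd * B).trace with htd_def
  have hsum : ta + tb - tc - td = 4 := by
    rw [hta_def, htb_def, htc_def, htd_def]
    rw [← Matrix.trace_add, ← Matrix.trace_sub, ← Matrix.trace_sub,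
      ← Matrix.add_mul, ← Matrix.sub_mul, ← Matrix.sub_mul]
    exact hsat
  -- upper bounds
  have hub : ∀ (ρ : Mat4), ρ.PosSemidef → ρ.trace = 1 → (ρ * B).trace ≤ 1 := by
    intro ρ hρ hρtr
    have := trace_mul_le_one hρ hρtr hBn hB2n
    rwa [Matrix.mul_neg, Matrix.trace_neg, neg_neg] at this
  have hlb : ∀ (ρ : Mat4), ρ.PosSemidef → ρ.trace = 1 → -(ρ * B).trace ≤ 1 :=
    fun ρ hρ hρtr => trace_mul_le_one hρ hρtr hB hB2
  have ha1 : ta ≤ 1 := hub ρa ha hatr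
  have hb1 : tb ≤ 1 := hub ρb hb hbtr
  have hc1 : -tc ≤ 1 := hlb ρc hc hctr
  have hd1 : -td ≤ 1 := hlb ρd hd hdtr
  have ha1' : -ta ≤ 1 := hlb ρa ha hatr
  have hb1' : -tb ≤ 1 := hlb ρb hb hbtr
  have hc1' : tc ≤ 1 := hub ρc hc hctr
  have hd1' : td ≤ 1 := hub ρd hd hdtr
  -- saturation forces each term
  have hta : ta = 1 := by
    refine le_antisymm ha1 ?_
    have h3 : tb + -tc + -td ≤ 3 := by
      calc tb + -tc + -td ≤ 1 + 1 + 1 := add_le_add (add_le_add hb1 hc1) hd1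
        _ = 3 := by norm_num
    calc (1:ℂ) = 4 - 3 := by norm_num
      _ ≤ 4 - (tb + -tc + -td) := sub_le_sub_left h3 4
      _ = ta := by linear_combination -hsum
  have htb : tb = 1 := by
    refine le_antisymm hb1 ?_
    have h3 : ta + -tc + -td ≤ 3 := by
      calc ta + -tc + -td ≤ 1 + 1 + 1 := add_le_add (add_le_add ha1 hc1) hd1
        _ = 3 := by norm_num
    calc (1:ℂ) = 4 - 3 := by norm_num
      _ ≤ 4 - (ta + -tc + -td) := sub_le_sub_left h3 4
      _ = tb := by linear_combination -hsum
  have htc : tc = -1 := by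
    have : -tc = 1 := by
      refine le_antisymm hc1 ?_
      have h3 : ta + tb + -td ≤ 3 := by
        calc ta + tb + -td ≤ 1 + 1 + 1 := add_le_add (add_le_add ha1 hb1) hd1
          _ = 3 := by norm_num
      calc (1:ℂ) = 4 - 3 := by norm_num
        _ ≤ 4 - (ta + tb + -td) := sub_le_sub_left h3 4
        _ = -tc := by linear_combination -hsum
    linear_combination -this
  have htd : td = -1 := by
    have : -td = 1 := by
      refine le_antisymm hd1 ?_
      have h3 : ta + tb + -tc ≤ 3 := by
        calc ta + tb + -tc ≤ 1 + 1 + 1 := add_le_add (add_le_add ha1 hb1) hc1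
          _ = 3 := by norm_num
      calc (1:ℂ) = 4 - 3 := by norm_num
        _ ≤ 4 - (ta + tb + -tc) := sub_le_sub_left h3 4
        _ = -td := by linear_combination -hsum
    linear_combination -this
  -- eigenstate conclusions
  have hBa : B * ρa = ρa := fix_of_trace_eq_one ha hatr hB hB2 hta
  have hBb : B * ρb = ρb := fix_of_trace_eq_one hb hbtr hB hB2 htb
  have hBc' : (-B) * ρc = ρc := by
    refine fix_of_trace_eq_one hc hctr hBn hB2n ?_
    rw [Matrix.mul_neg, Matrix.trace_neg, ← htc_def, htc, neg_neg]
  have hBd' : (-B) * ρd = ρd := by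
    refine fix_of_trace_eq_one hd hdtr hBn hB2n ?_
    rw [Matrix.mul_neg, Matrix.trace_neg, ← htd_def, htd, neg_neg]
  have hBc : B * ρc = -ρc := by
    rw [Matrix.neg_mul] at hBc'
    exact neg_eq_iff_eq_neg.mp hBc'
  have hBd : B * ρd = -ρd := by
    rw [Matrix.neg_mul] at hBd'
    exact neg_eq_iff_eq_neg.mp hBd'
  exact ⟨hBa, hBb, hBc, hBd,
    orth_trace ha.isHermitian hB hBa hBc,
    orth_trace ha.isHermitian hB hBa hBd,
    orth_trace hb.isHermitian hB hBb hBc,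
    orth_trace hb.isHermitian hB hBb hBd⟩
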